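/- Consider the octahedron graph (the 1-skeleton of the octahedron, i.e. the complete tripartite graph K_{2,2,2} with vertex set {1,…,6} and pairs of non-adjacent vertices {1,4}, {2,5}, {3,6}), embedded on the 2-sphere with its 8 triangular faces. Suppose two distinct vertices N and S and two edge-disjoint N-to-S paths P₁, P₂ in the graph are given such that P₁ ∪ P₂ is a simple closed curve decomposing the remaining faces into two hemispheres W and E, and suppose: (a) for each of the two hemispheres, the face in that hemisphere adjacent to the first edge of one meridian path at N shares at least one meridian edge with the face in the opposite hemisphere adjacent to the last edge of the same meridian path at S; and (b) there is an acyclic edge orientation with unique source N and unique sink S in which every edge interior to W with an endpoint on (P₁ ∪ P₂) \ {N, S} points toward that endpoint, and every edge interior to E with an endpoint on (P₁ ∪ P₂) \ {N, S} points away from it. Then N and S are adjacent vertices of the octahedron (they are not an antipodal pair). -/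

import Mathlib

/-- Adjacency in the octahedron graph K_{2,2,2} on vertices {0,…,5}, with
antipodal (non-adjacent) pairs {0,3}, {1,4}, {2,5} (equal residues mod 3). -/
def octAdj (a b : Fin 6) : Prop := a ≠ b ∧ a.val % 3 ≠ b.val % 3

/-- The triangular faces of the octahedron: 3-element cliques. -/
def octFace (F : Finset (Fin 6)) : Prop :=
  F.card = 3 ∧ ∀ a ∈ F, ∀ b ∈ F, a ≠ b → octAdj a b

/-- The edges of the octahedron, as unordered pairs of adjacent vertices. -/
def octEdge (e : Finset (Fin 6)) : Prop := ∃ a b : Fin 6, octAdj a b ∧ e = {a, b}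

/-- `e` is an edge traversed by the vertex list `P`. -/
def pathEdge (P : List (Fin 6)) (e : Finset (Fin 6)) : Prop :=
  ∃ (k : ℕ) (h : k + 1 < P.length),
    e = {P.get ⟨k, Nat.lt_of_succ_lt h⟩, P.get ⟨k + 1, h⟩}

/-- `e` is the first edge of the vertex list `P`. -/
def firstEdge (P : List (Fin 6)) (e : Finset (Fin 6)) : Prop :=
  ∃ h : 1 < P.length, e = {P.get ⟨0, Nat.lt_of_succ_lt h⟩, P.get ⟨1, h⟩}

/-- `e` is the last edge of the vertex list `P`. -/
def lastEdge (P : List (Fin 6)) (e : Finset (Fin 6)) : Prop := firstEdge P.reverse e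

/-- `P` is a simple path in the octahedron graph from `Nv` to `Sv`. -/
def isPath (P : List (Fin 6)) (Nv Sv : Fin 6) : Prop :=
  P.head? = some Nv ∧ P.getLast? = some Sv ∧ List.Chain' octAdj P ∧ P.Nodup

lemma octAdj_symm {a b : Fin 6} (h : octAdj a b) : octAdj b a := ⟨h.1.symm, h.2.symm⟩

lemma octEdge_pair {a b : Fin 6} (h : octAdj a b) : octEdge {a, b} := ⟨a, b, h, rfl⟩

lemma octFace3 {u v w : Fin 6} (h1 : octAdj u v) (h2 : octAdj u w) (h3 : octAdj v w) :
    octFace {u, v, w} := by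
  refine ⟨?_, ?_⟩
  · rw [Finset.card_insert_of_notMem (by simp [h1.1, h2.1]),
      Finset.card_insert_of_notMem (by simp [h3.1]), Finset.card_singleton]
  · intro a ha b hb hab
    simp only [Finset.mem_insert, Finset.mem_singleton] at ha hb
    rcases ha with rfl | rfl | rfl <;> rcases hb with rfl | rfl | rfl <;>
      first
        | exact absurd rfl hab
        | assumption
        | exact octAdj_symm h1
        | exact octAdj_symm h2
        | exact octAdj_symm h3

lemma mem_of_pathEdge {P : List (Fin 6)} {e : Finset (Fin 6)} {v : Fin 6}
    (h : pathEdge P e) (hv : v ∈ e) : v ∈ P := by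
  obtain ⟨k, hk, rfl⟩ := h
  simp only [Finset.mem_insert, Finset.mem_singleton] at hv
  rcases hv with rfl | rfl
  · exact List.get_mem _ _
  · exact List.get_mem _ _

lemma pathEdge3_iff (u v w : Fin 6) (e : Finset (Fin 6)) :
    pathEdge [u, v, w] e ↔ e = {u, v} ∨ e = {v, w} := by
  constructor
  · rintro ⟨k, hk, rfl⟩
    simp only [List.length_cons, List.length_nil] at hk
    have : k < 2 := by omega
    interval_cases k
    · exact Or.inl rfl
    · exact Or.inr rfl
  · rintro (rfl | rfl)
    · exact ⟨0, by simp, rfl⟩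
    · exact ⟨1, by simp, rfl⟩

lemma pathEdge4_iff (u v w z : Fin 6) (e : Finset (Fin 6)) :
    pathEdge [u, v, w, z] e ↔ e = {u, v} ∨ e = {v, w} ∨ e = {w, z} := by
  constructor
  · rintro ⟨k, hk, rfl⟩
    simp only [List.length_cons, List.length_nil] at hk
    have : k < 3 := by omega
    interval_cases k
    · exact Or.inl rfl
    · exact Or.inr (Or.inl rfl)
    · exact Or.inr (Or.inr rfl)
  · rintro (rfl | rfl | rfl)
    · exact ⟨0, by simp, rfl⟩
    · exact ⟨1, by simp, rfl⟩
    · exact ⟨2, by simp, rfl⟩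

lemma pathEdge3_left (u v w : Fin 6) : pathEdge [u, v, w] {u, v} := ⟨0, by simp, rfl⟩
lemma pathEdge3_right (u v w : Fin 6) : pathEdge [u, v, w] {v, w} := ⟨1, by simp, rfl⟩
lemma pathEdge4_0 (u v w z : Fin 6) : pathEdge [u, v, w, z] {u, v} := ⟨0, by simp, rfl⟩
lemma pathEdge4_2 (u v w z : Fin 6) : pathEdge [u, v, w, z] {w, z} := ⟨2, by simp, rfl⟩

lemma firstEdge3 (u v w : Fin 6) : firstEdge [u, v, w] {u, v} := ⟨by simp, rfl⟩
lemma lastEdge3 (u v w : Fin 6) : lastEdge [u, v, w] {v, w} := by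
  show firstEdge [u, v, w].reverse {v, w}
  have h : [u, v, w].reverse = [w, v, u] := rfl
  rw [h]
  exact ⟨by simp, Finset.pair_comm v w⟩

lemma firstEdge4 (u v w z : Fin 6) : firstEdge [u, v, w, z] {u, v} := ⟨by simp, rfl⟩
lemma lastEdge4 (u v w z : Fin 6) : lastEdge [u, v, w, z] {w, z} := by
  show firstEdge [u, v, w, z].reverse {w, z}
  have h : [u, v, w, z].reverse = [z, w, v, u] := rfl
  rw [h]
  exact ⟨by simp, Finset.pair_comm w z⟩

instance octAdj.dec (a b : Fin 6) : Decidable (octAdj a b) := by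
  unfold octAdj; infer_instance

/-- Any non-pole vertex is adjacent to each pole, when the poles are antipodal. -/
lemma pole_adj : ∀ N S v : Fin 6, N ≠ S → N.val % 3 = S.val % 3 → v ≠ N → v ≠ S →
    octAdj N v := by decide

/-- An interior vertex `a` adjacent to both antipodal poles has two equatorial
neighbours `x, x'`. -/
lemma exist_xx' : ∀ N S a : Fin 6, N ≠ S → N.val % 3 = S.val % 3 → octAdj N a →
    ∃ x x' : Fin 6, x ≠ x' ∧ x ≠ N ∧ x ≠ S ∧ x ≠ a ∧ x' ≠ N ∧ x' ≠ S ∧ x' ≠ a ∧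
      octAdj a x ∧ octAdj a x' ∧ octAdj N x ∧ octAdj N x' ∧ octAdj S x ∧ octAdj S x' := by
  decide

set_option maxHeartbeats 3200000 in
/-- Four distinct equatorial vertices `a x c d` with `a~x`, `c~d`: either `a~c, x~d`
or `a~d, x~c`. -/
lemma pick_ww' : ∀ N S a x c d : Fin 6, N ≠ S → N.val % 3 = S.val % 3 →
    a ≠ N → a ≠ S → x ≠ N → x ≠ S → c ≠ N → c ≠ S → d ≠ N → d ≠ S →
    a ≠ c → a ≠ d → x ≠ c → x ≠ d → a ≠ x → c ≠ d →
    octAdj a x → octAdj c d →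
    (octAdj a c ∧ octAdj x d) ∨ (octAdj a d ∧ octAdj x c) := by decide

lemma five_absurd (N S p q r s t : Fin 6) (h1 : N ≠ S)
    (hp1 : p ≠ N) (hp2 : p ≠ S) (hq1 : q ≠ N) (hq2 : q ≠ S) (hr1 : r ≠ N) (hr2 : r ≠ S)
    (hs1 : s ≠ N) (hs2 : s ≠ S) (ht1 : t ≠ N) (ht2 : t ≠ S)
    (h3 : p ≠ q) (h4 : p ≠ r) (h5 : p ≠ s) (h6 : p ≠ t) (h7 : q ≠ r) (h8 : q ≠ s)
    (h9 : q ≠ t) (h10 : r ≠ s) (h11 : r ≠ t) (h12 : s ≠ t) : False := by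
  have hc7 : ({N, S, p, q, r, s, t} : Finset (Fin 6)).card = 7 := by
    rw [Finset.card_insert_of_notMem (by
        simp [h1, Ne.symm hp1, Ne.symm hq1, Ne.symm hr1, Ne.symm hs1, Ne.symm ht1]),
      Finset.card_insert_of_notMem (by
        simp [Ne.symm hp2, Ne.symm hq2, Ne.symm hr2, Ne.symm hs2, Ne.symm ht2]),
      Finset.card_insert_of_notMem (by simp [h3, h4, h5, h6]),
      Finset.card_insert_of_notMem (by simp [h7, h8, h9]),
      Finset.card_insert_of_notMem (by simp [h10, h11]),
      Finset.card_insert_of_notMem (by simp [h12]),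
      Finset.card_singleton]
  have hle := Finset.card_le_card (Finset.subset_univ ({N, S, p, q, r, s, t} : Finset (Fin 6)))
  rw [hc7, Finset.card_univ] at hle
  simp at hle

/-- Core contradiction: a meridian with exactly one interior vertex `a`
(antipodal poles), using the overlap condition. -/
lemma core1 (mer : Finset (Fin 6) → Prop) (H : Finset (Fin 6) → Bool)
    (N S a x x' : Fin 6)
    (hNS : N ≠ S) (haN : a ≠ N) (haS : a ≠ S)
    (hxx' : x ≠ x') (hxN : x ≠ N) (hxS : x ≠ S) (hxa : x ≠ a)
    (hx'N : x' ≠ N) (hx'S : x' ≠ S) (hx'a : x' ≠ a)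
    (hNa : octAdj N a) (haSa : octAdj a S) (hax : octAdj a x) (hax' : octAdj a x')
    (hNx : octAdj N x) (hNx' : octAdj N x') (hSx : octAdj S x) (hSx' : octAdj S x')
    (hsep : ∀ e F G, octEdge e → octFace F → octFace G → e ⊆ F → e ⊆ G → F ≠ G →
      (mer e ↔ H F ≠ H G))
    (hov : ∀ F G, octFace F → octFace G → ({N, a} : Finset (Fin 6)) ⊆ F →
      ({a, S} : Finset (Fin 6)) ⊆ G → H F ≠ H G →
      ∃ e, octEdge e ∧ mer e ∧ e ⊆ F ∧ e ⊆ G)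
    (hm1 : mer {N, a}) (hm2 : mer {a, S})
    (hn1 : ¬ mer {a, x}) (hn2 : ¬ mer {a, x'}) : False := by
  have hF1 : octFace {N, a, x} := octFace3 hNa hNx (octAdj_symm (octAdj_symm hax))
  have hF2 : octFace {N, a, x'} := octFace3 hNa hNx' hax'
  have hG1 : octFace {S, a, x} := octFace3 (octAdj_symm haSa) hSx hax
  have hG2 : octFace {S, a, x'} := octFace3 (octAdj_symm haSa) hSx' hax'
  have hsub1 : ({N, a} : Finset (Fin 6)) ⊆ {N, a, x} := by
    intro y hy; simp only [Finset.mem_insert, Finset.mem_singleton] at hy ⊢; tauto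
  have hsub2 : ({N, a} : Finset (Fin 6)) ⊆ {N, a, x'} := by
    intro y hy; simp only [Finset.mem_insert, Finset.mem_singleton] at hy ⊢; tauto
  have hsub3 : ({a, S} : Finset (Fin 6)) ⊆ {S, a, x} := by
    intro y hy; simp only [Finset.mem_insert, Finset.mem_singleton] at hy ⊢; tauto
  have hsub4 : ({a, S} : Finset (Fin 6)) ⊆ {S, a, x'} := by
    intro y hy; simp only [Finset.mem_insert, Finset.mem_singleton] at hy ⊢; tauto
  have hF12 : H {N, a, x} ≠ H {N, a, x'} := by
    refine (hsep {N, a} _ _ (octEdge_pair hNa) hF1 hF2 hsub1 hsub2 ?_).mp hm1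
    intro hEq
    have : x ∈ ({N, a, x'} : Finset (Fin 6)) := hEq ▸ (by simp)
    simp only [Finset.mem_insert, Finset.mem_singleton] at this
    rcases this with h | h | h
    exacts [hxN h, hxa h, hxx' h]
  have hG12 : H {S, a, x} ≠ H {S, a, x'} := by
    refine (hsep {a, S} _ _ (octEdge_pair haSa) hG1 hG2 hsub3 hsub4 ?_).mp hm2
    intro hEq
    have : x ∈ ({S, a, x'} : Finset (Fin 6)) := hEq ▸ (by simp)
    simp only [Finset.mem_insert, Finset.mem_singleton] at this
    rcases this with h | h | h
    exacts [hxS h, hxa h, hxx' h]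
  by_cases hc : H {N, a, x} = H {S, a, x}
  · have hne : H {N, a, x} ≠ H {S, a, x'} := fun h => hG12 (hc ▸ h)
    obtain ⟨e, heE, -, heF, heG⟩ := hov {N, a, x} {S, a, x'} hF1 hG2 hsub1 hsub4 hne
    obtain ⟨p, q, hpq, rfl⟩ := heE
    have hp1 : p ∈ ({N, a, x} : Finset (Fin 6)) := heF (by simp)
    have hp2 : p ∈ ({S, a, x'} : Finset (Fin 6)) := heG (by simp)
    have hq1 : q ∈ ({N, a, x} : Finset (Fin 6)) := heF (by simp)
    have hq2 : q ∈ ({S, a, x'} : Finset (Fin 6)) := heG (by simp)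
    simp only [Finset.mem_insert, Finset.mem_singleton] at hp1 hp2 hq1 hq2
    have hpa : p = a := by
      rcases hp1 with rfl | rfl | rfl
      · rcases hp2 with h | h | h
        exacts [absurd h hNS, absurd h.symm haN, absurd h.symm hx'N]
      · rfl
      · rcases hp2 with h | h | h
        exacts [absurd h hxS, absurd h hxa, absurd h hxx']
    have hqa : q = a := by
      rcases hq1 with rfl | rfl | rfl
      · rcases hq2 with h | h | h
        exacts [absurd h hNS, absurd h.symm haN, absurd h.symm hx'N]
      · rfl
      · rcases hq2 with h | h | h
        exacts [absurd h hxS, absurd h hxa, absurd h hxx']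
    exact hpq.1 (hpa.trans hqa.symm)
  · obtain ⟨e, heE, heM, heF, heG⟩ := hov {N, a, x} {S, a, x} hF1 hG1 hsub1 hsub3 hc
    obtain ⟨p, q, hpq, rfl⟩ := heE
    have hp1 : p ∈ ({N, a, x} : Finset (Fin 6)) := heF (by simp)
    have hp2 : p ∈ ({S, a, x} : Finset (Fin 6)) := heG (by simp)
    have hq1 : q ∈ ({N, a, x} : Finset (Fin 6)) := heF (by simp)
    have hq2 : q ∈ ({S, a, x} : Finset (Fin 6)) := heG (by simp)
    simp only [Finset.mem_insert, Finset.mem_singleton] at hp1 hp2 hq1 hq2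
    have hpax : p = a ∨ p = x := by
      rcases hp1 with rfl | rfl | rfl
      · rcases hp2 with h | h | h
        exacts [absurd h hNS, absurd h.symm haN, absurd h.symm hxN]
      · exact Or.inl rfl
      · exact Or.inr rfl
    have hqax : q = a ∨ q = x := by
      rcases hq1 with rfl | rfl | rfl
      · rcases hq2 with h | h | h
        exacts [absurd h hNS, absurd h.symm haN, absurd h.symm hxN]
      · exact Or.inl rfl
      · exact Or.inr rfl
    rcases hpax with rfl | rfl <;> rcases hqax with rfl | rfl
    · exact hpq.1 rfl
    · exact hn1 heM
    · exact hn1 (by rwa [Finset.pair_comm] at heM)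
    · exact hpq.1 rfl

/-- Core contradiction: both meridians with exactly two interior vertices
(antipodal poles). `P₁ = [N,a,x,S]`; `w` is the other equatorial neighbour of `a`,
`w'` that of `x`, with `{w,w'}` the interior of `P₂`. -/
lemma core2 (mer : Finset (Fin 6) → Prop) (H : Finset (Fin 6) → Bool)
    (N S a x w w' : Fin 6)
    (hNS : N ≠ S) (haS : a ≠ S) (hwS : w ≠ S) (haw' : a ≠ w') (hww' : w ≠ w')
    (hxw : x ≠ w) (hwN : w ≠ N)
    (hNa : octAdj N a) (hNx : octAdj N x) (hNw : octAdj N w) (hNw' : octAdj N w')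
    (hax : octAdj a x) (haw : octAdj a w) (hxw' : octAdj x w')
    (hSx : octAdj S x) (hSw' : octAdj S w')
    (hsep : ∀ e F G, octEdge e → octFace F → octFace G → e ⊆ F → e ⊆ G → F ≠ G →
      (mer e ↔ H F ≠ H G))
    (hov : ∀ F G, octFace F → octFace G → ({N, a} : Finset (Fin 6)) ⊆ F →
      ({x, S} : Finset (Fin 6)) ⊆ G → H F ≠ H G →
      ∃ e, octEdge e ∧ mer e ∧ e ⊆ F ∧ e ⊆ G)
    (hm1 : mer {N, a}) (hn1 : ¬ mer {N, x}) (hn2 : ¬ mer {x, w'}) : False := by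
  have hF1 : octFace {N, a, x} := octFace3 hNa hNx hax
  have hF2 : octFace {N, a, w} := octFace3 hNa hNw haw
  have hF3 : octFace {N, x, w'} := octFace3 hNx hNw' hxw'
  have hG : octFace {S, x, w'} := octFace3 hSx hSw' hxw'
  have hsub1 : ({N, a} : Finset (Fin 6)) ⊆ {N, a, x} := by
    intro y hy; simp only [Finset.mem_insert, Finset.mem_singleton] at hy ⊢; tauto
  have hsub2 : ({N, a} : Finset (Fin 6)) ⊆ {N, a, w} := by
    intro y hy; simp only [Finset.mem_insert, Finset.mem_singleton] at hy ⊢; tauto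
  have hsub3 : ({N, x} : Finset (Fin 6)) ⊆ {N, a, x} := by
    intro y hy; simp only [Finset.mem_insert, Finset.mem_singleton] at hy ⊢; tauto
  have hsub4 : ({N, x} : Finset (Fin 6)) ⊆ {N, x, w'} := by
    intro y hy; simp only [Finset.mem_insert, Finset.mem_singleton] at hy ⊢; tauto
  have hsub5 : ({x, w'} : Finset (Fin 6)) ⊆ {N, x, w'} := by
    intro y hy; simp only [Finset.mem_insert, Finset.mem_singleton] at hy ⊢; tauto
  have hsub6 : ({x, w'} : Finset (Fin 6)) ⊆ {S, x, w'} := by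
    intro y hy; simp only [Finset.mem_insert, Finset.mem_singleton] at hy ⊢; tauto
  have hsub7 : ({x, S} : Finset (Fin 6)) ⊆ {S, x, w'} := by
    intro y hy; simp only [Finset.mem_insert, Finset.mem_singleton] at hy ⊢; tauto
  -- H {N,a,w} ≠ H {N,a,x}
  have hstep1 : H {N, a, x} ≠ H {N, a, w} := by
    refine (hsep {N, a} _ _ (octEdge_pair hNa) hF1 hF2 hsub1 hsub2 ?_).mp hm1
    intro hEq
    have : x ∈ ({N, a, w} : Finset (Fin 6)) := hEq ▸ (by simp)
    simp only [Finset.mem_insert, Finset.mem_singleton] at this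
    rcases this with h | h | h
    exacts [hNx.1 h.symm, hax.1 h.symm, hxw h]
  -- H {N,a,x} = H {N,x,w'}
  have hstep2 : H {N, a, x} = H {N, x, w'} := by
    by_contra hne
    refine hn1 ((hsep {N, x} _ _ (octEdge_pair hNx) hF1 hF3 hsub3 hsub4 ?_).mpr hne)
    intro hEq
    have : a ∈ ({N, x, w'} : Finset (Fin 6)) := hEq ▸ (by simp)
    simp only [Finset.mem_insert, Finset.mem_singleton] at this
    rcases this with h | h | h
    exacts [hNa.1 h.symm, hax.1 h, haw' h]
  -- H {N,x,w'} = H {S,x,w'}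
  have hstep3 : H {N, x, w'} = H {S, x, w'} := by
    by_contra hne
    refine hn2 ((hsep {x, w'} _ _ (octEdge_pair hxw') hF3 hG hsub5 hsub6 ?_).mpr hne)
    intro hEq
    have : N ∈ ({S, x, w'} : Finset (Fin 6)) := hEq ▸ (by simp)
    simp only [Finset.mem_insert, Finset.mem_singleton] at this
    rcases this with h | h | h
    exacts [hNS h, hNx.1 h, hNw'.1 h]
  have hfin : H {N, a, w} ≠ H {S, x, w'} := by
    rw [← hstep3, ← hstep2]; exact fun h => hstep1 h.symm
  obtain ⟨e, heE, -, heF, heG⟩ := hov {N, a, w} {S, x, w'} hF2 hG hsub2 hsub7 hfin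
  obtain ⟨p, q, hpq, rfl⟩ := heE
  have hp1 : p ∈ ({N, a, w} : Finset (Fin 6)) := heF (by simp)
  have hp2 : p ∈ ({S, x, w'} : Finset (Fin 6)) := heG (by simp)
  simp only [Finset.mem_insert, Finset.mem_singleton] at hp1 hp2
  rcases hp1 with rfl | rfl | rfl
  · rcases hp2 with h | h | h
    exacts [hNS h, hNx.1 h, hNw'.1 h]
  · rcases hp2 with h | h | h
    exacts [haS h, hax.1 h, haw' h]
  · rcases hp2 with h | h | h
    exacts [hwS h, hxw h.symm, hww' h]

lemma mem2_of_pair_eq {p q r s : Fin 6} (h : ({p, q} : Finset (Fin 6)) = {r, s}) :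
    q = r ∨ q = s := by
  have : q ∈ ({r, s} : Finset (Fin 6)) := h ▸ (by simp)
  simpa using this

lemma mem1_of_pair_eq {p q r s : Fin 6} (h : ({p, q} : Finset (Fin 6)) = {r, s}) :
    p = r ∨ p = s := by
  have : p ∈ ({r, s} : Finset (Fin 6)) := h ▸ (by simp)
  simpa using this

lemma not_pathEdge_of_not_mem {P : List (Fin 6)} {e : Finset (Fin 6)} {v : Fin 6}
    (hv : v ∈ e) (hvP : v ∉ P) : ¬ pathEdge P e := fun h => hvP (mem_of_pathEdge h hv)

/-- Wrapper: a meridian `[N, a, S]` with one interior vertex gives a contradiction. -/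
lemma onecase (H : Finset (Fin 6) → Bool) (Q : List (Fin 6)) (N S a : Fin 6)
    (hNS : N ≠ S) (hmod : N.val % 3 = S.val % 3)
    (haN : a ≠ N) (haS : a ≠ S) (hNa : octAdj N a) (haSa : octAdj a S)
    (haQ : a ∉ Q)
    (mer : Finset (Fin 6) → Prop)
    (hmer_iff : ∀ e, mer e ↔ pathEdge [N, a, S] e ∨ pathEdge Q e)
    (hsep : ∀ e F G, octEdge e → octFace F → octFace G → e ⊆ F → e ⊆ G → F ≠ G →
      (mer e ↔ H F ≠ H G))
    (hov : ∀ F G, octFace F → octFace G →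
      (∃ e, octEdge e ∧ firstEdge [N, a, S] e ∧ e ⊆ F) →
      (∃ e, octEdge e ∧ lastEdge [N, a, S] e ∧ e ⊆ G) →
      H F ≠ H G → ∃ e, octEdge e ∧ mer e ∧ e ⊆ F ∧ e ⊆ G) : False := by
  obtain ⟨x, x', hxx', hxN, hxS, hxa, hx'N, hx'S, hx'a, hax, hax', hNx, hNx', hSx, hSx'⟩ :=
    exist_xx' N S a hNS hmod hNa
  refine core1 mer H N S a x x' hNS haN haS hxx' hxN hxS hxa hx'N hx'S hx'a
    hNa haSa hax hax' hNx hNx' hSx hSx' hsep ?_ ?_ ?_ ?_ ?_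
  · intro F G hF hG hsubF hsubG hne
    exact hov F G hF hG ⟨{N, a}, octEdge_pair hNa, firstEdge3 N a S, hsubF⟩
      ⟨{a, S}, octEdge_pair haSa, lastEdge3 N a S, hsubG⟩ hne
  · exact (hmer_iff _).mpr (Or.inl (pathEdge3_left N a S))
  · exact (hmer_iff _).mpr (Or.inl (pathEdge3_right N a S))
  · intro hm
    rcases (hmer_iff _).mp hm with h | h
    · rcases (pathEdge3_iff N a S _).mp h with h | h
      · rcases mem2_of_pair_eq h with h' | h'
        exacts [hxN h', hxa h']
      · rcases mem2_of_pair_eq h with h' | h'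
        exacts [hxa h', hxS h']
    · exact haQ (mem_of_pathEdge h (by simp))
  · intro hm
    rcases (hmer_iff _).mp hm with h | h
    · rcases (pathEdge3_iff N a S _).mp h with h | h
      · rcases mem2_of_pair_eq h with h' | h'
        exacts [hx'N h', hx'a h']
      · rcases mem2_of_pair_eq h with h' | h'
        exacts [hx'a h', hx'S h']
    · exact haQ (mem_of_pathEdge h (by simp))

/-- Wrapper: two meridians `[N,a,x,S]`, `[N,c,d,S]` with two interior vertices each
give a contradiction. -/
lemma twocase (H : Finset (Fin 6) → Bool) (N S a x c d : Fin 6)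
    (hNS : N ≠ S) (hmod : N.val % 3 = S.val % 3)
    (haN : a ≠ N) (haS : a ≠ S) (hxN : x ≠ N) (hxS : x ≠ S)
    (hcN : c ≠ N) (hcS : c ≠ S) (hdN : d ≠ N) (hdS : d ≠ S)
    (hac : a ≠ c) (had : a ≠ d) (hxc : x ≠ c) (hxd : x ≠ d)
    (haxne : a ≠ x) (hcdne : c ≠ d)
    (hNa : octAdj N a) (hax : octAdj a x) (hxS' : octAdj x S)
    (hNc : octAdj N c) (hcd : octAdj c d) (hdS' : octAdj d S)
    (mer : Finset (Fin 6) → Prop)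
    (hmer_iff : ∀ e, mer e ↔ pathEdge [N, a, x, S] e ∨ pathEdge [N, c, d, S] e)
    (hsep : ∀ e F G, octEdge e → octFace F → octFace G → e ⊆ F → e ⊆ G → F ≠ G →
      (mer e ↔ H F ≠ H G))
    (hov : ∀ F G, octFace F → octFace G →
      (∃ e, octEdge e ∧ firstEdge [N, a, x, S] e ∧ e ⊆ F) →
      (∃ e, octEdge e ∧ lastEdge [N, a, x, S] e ∧ e ⊆ G) →
      H F ≠ H G → ∃ e, octEdge e ∧ mer e ∧ e ⊆ F ∧ e ⊆ G) : False := by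
  have hNx : octAdj N x := pole_adj N S x hNS hmod hxN hxS
  have hNd : octAdj N d := pole_adj N S d hNS hmod hdN hdS
  have hSx : octAdj S x := octAdj_symm hxS'
  have hSc : octAdj S c := pole_adj S N c hNS.symm hmod.symm hcS hcN
  have hSd : octAdj S d := octAdj_symm hdS'
  have hov' : ∀ F G, octFace F → octFace G → ({N, a} : Finset (Fin 6)) ⊆ F →
      ({x, S} : Finset (Fin 6)) ⊆ G → H F ≠ H G →
      ∃ e, octEdge e ∧ mer e ∧ e ⊆ F ∧ e ⊆ G := by
    intro F G hF hG hsubF hsubG hne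
    exact hov F G hF hG ⟨{N, a}, octEdge_pair hNa, firstEdge4 N a x S, hsubF⟩
      ⟨{x, S}, octEdge_pair (octAdj_symm hSx), lastEdge4 N a x S, hsubG⟩ hne
  have hm1 : mer {N, a} := (hmer_iff _).mpr (Or.inl (pathEdge4_0 N a x S))
  have hn1 : ¬ mer {N, x} := by
    intro hm
    rcases (hmer_iff _).mp hm with h | h
    · rcases (pathEdge4_iff N a x S _).mp h with h | h | h
      · rcases mem2_of_pair_eq h with h' | h'
        exacts [hxN h', haxne h'.symm]
      · rcases mem1_of_pair_eq h with h' | h'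
        exacts [hNa.1 h', hNx.1 h']
      · rcases mem1_of_pair_eq h with h' | h'
        exacts [hNx.1 h', hNS h']
    · refine not_pathEdge_of_not_mem (v := x) (by simp) ?_ h
      simp only [List.mem_cons, List.not_mem_nil, or_false]
      push_neg
      exact ⟨hxN, hxc, hxd, hxS⟩
  rcases pick_ww' N S a x c d hNS hmod haN haS hxN hxS hcN hcS hdN hdS
      hac had hxc hxd haxne hcdne hax hcd with ⟨hac', hxd'⟩ | ⟨had', hxc'⟩
  · -- w = c, w' = d
    have hn2 : ¬ mer {x, d} := by
      intro hm
      rcases (hmer_iff _).mp hm with h | h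
      · rcases (pathEdge4_iff N a x S _).mp h with h | h | h
        · rcases mem1_of_pair_eq h with h' | h'
          exacts [hxN h', haxne h'.symm]
        · rcases mem2_of_pair_eq h with h' | h'
          exacts [had h'.symm, hxd h'.symm]
        · rcases mem2_of_pair_eq h with h' | h'
          exacts [hxd h'.symm, hdS h']
      · refine not_pathEdge_of_not_mem (v := x) (by simp) ?_ h
        simp only [List.mem_cons, List.not_mem_nil, or_false]
        push_neg
        exact ⟨hxN, hxc, hxd, hxS⟩
    exact core2 mer H N S a x c d hNS haS hcS had hcdne hxc hcN
      hNa hNx hNc hNd hax hac' hxd' hSx hSd hsep hov' hm1 hn1 hn2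
  · -- w = d, w' = c
    have hn2 : ¬ mer {x, c} := by
      intro hm
      rcases (hmer_iff _).mp hm with h | h
      · rcases (pathEdge4_iff N a x S _).mp h with h | h | h
        · rcases mem1_of_pair_eq h with h' | h'
          exacts [hxN h', haxne h'.symm]
        · rcases mem2_of_pair_eq h with h' | h'
          exacts [hac h'.symm, hxc h'.symm]
        · rcases mem2_of_pair_eq h with h' | h'
          exacts [hxc h'.symm, hcS h']
      · refine not_pathEdge_of_not_mem (v := x) (by simp) ?_ h
        simp only [List.mem_cons, List.not_mem_nil, or_false]
        push_neg
        exact ⟨hxN, hxc, hxd, hxS⟩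
    exact core2 mer H N S a x d c hNS haS hdS hac hcdne.symm hxd hdN
      hNa hNx hNd hNc hax had' hxc' hSx hSc hsep hov' hm1 hn1 hn2

lemma path_shape (N S : Fin 6) (P : List (Fin 6)) (h : isPath P N S)
    (hne : N ≠ S) (hno : ¬ octAdj N S) :
    (∃ a, P = [N, a, S]) ∨ (∃ a b, P = [N, a, b, S]) ∨ (∃ a b c, P = [N, a, b, c, S]) ∨
      (∃ a b c d, P = [N, a, b, c, d, S]) := by
  obtain ⟨h1, h2, h3, h4⟩ := h
  have hlen : P.length ≤ 6 := by
    have := h4.length_le_card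
    simpa using this
  rcases P with _ | ⟨a0, _ | ⟨a1, _ | ⟨a2, _ | ⟨a3, _ | ⟨a4, _ | ⟨a5, rest⟩⟩⟩⟩⟩⟩
  · simp at h1
  · simp at h1 h2; subst h1; subst h2; exact absurd rfl hne
  · simp at h1 h2; subst h1; subst h2
    simp [List.Chain', List.isChain_cons_cons] at h3
    exact absurd h3 hno
  · simp at h1 h2; subst h1; subst h2
    exact Or.inl ⟨a1, rfl⟩
  · simp at h1 h2; subst h1; subst h2
    exact Or.inr (Or.inl ⟨a1, a2, rfl⟩)
  · simp at h1 h2; subst h1; subst h2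
    exact Or.inr (Or.inr (Or.inl ⟨a1, a2, a3, rfl⟩))
  · have hrest : rest = [] := by
      simp only [List.length_cons] at hlen
      exact List.eq_nil_of_length_eq_zero (by omega)
    subst hrest
    simp at h1 h2; subst h1; subst h2
    exact Or.inr (Or.inr (Or.inr ⟨a1, a2, a3, a4, rfl⟩))

/-- Proposition 6.1. Suppose the octahedron carries the structure of
a 3-cell template: poles `Nv ≠ Sv`; two edge-disjoint meridian paths `P₁, P₂` from
`Nv` to `Sv` meeting only at the poles; a hemisphere 2-coloring `H` of the 8 faces
such that two distinct faces sharing an edge get different colors exactly when the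
shared edge is a meridian edge, with both hemispheres nonempty; the meridian face
overlap condition (iv); and a bipolar acyclic edge orientation `o` with unique
source `Nv`, unique sink `Sv`, such that edges interior to the Western hemisphere
(`H = true`) point toward their meridian endpoints (≠ poles) and edges interior to
the Eastern hemisphere (`H = false`) point away from them. Then the poles are
edge-adjacent vertices of the octahedron (not an antipodal pair). -/
theorem octahedron_poles_adjacent
    (Nv Sv : Fin 6) (hNS : Nv ≠ Sv)
    (P₁ P₂ : List (Fin 6))
    (hP₁ : isPath P₁ Nv Sv) (hP₂ : isPath P₂ Nv Sv)
    (hdisj : ∀ e, ¬ (pathEdge P₁ e ∧ pathEdge P₂ e))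
    (hvert : ∀ v : Fin 6, v ∈ P₁ → v ∈ P₂ → v = Nv ∨ v = Sv)
    (H : Finset (Fin 6) → Bool)
    (hHsep : ∀ e F G, octEdge e → octFace F → octFace G → e ⊆ F → e ⊆ G → F ≠ G →
      ((pathEdge P₁ e ∨ pathEdge P₂ e) ↔ H F ≠ H G))
    (hW : ∃ F, octFace F ∧ H F = true) (hE : ∃ F, octFace F ∧ H F = false)
    (hoverlap : ∀ P, (P = P₁ ∨ P = P₂) → ∀ F G, octFace F → octFace G →
      (∃ e, octEdge e ∧ firstEdge P e ∧ e ⊆ F) →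
      (∃ e, octEdge e ∧ lastEdge P e ∧ e ⊆ G) →
      H F ≠ H G →
      ∃ e, octEdge e ∧ (pathEdge P₁ e ∨ pathEdge P₂ e) ∧ e ⊆ F ∧ e ⊆ G)
    (o : Fin 6 → Fin 6 → Prop)
    (ho : ∀ a b, o a b → octAdj a b)
    (htot : ∀ a b, octAdj a b → (o a b ↔ ¬ o b a))
    (hacyc : ∀ v, ¬ Relation.TransGen o v v)
    (hsource : ∀ v, (∀ u, ¬ o u v) ↔ v = Nv)
    (hsink : ∀ v, (∀ u, ¬ o v u) ↔ v = Sv)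
    (hWor : ∀ a b : Fin 6, octAdj a b →
      ¬ (pathEdge P₁ ({a, b} : Finset (Fin 6)) ∨ pathEdge P₂ {a, b}) →
      (∀ F, octFace F → ({a, b} : Finset (Fin 6)) ⊆ F → H F = true) →
      (b ∈ P₁ ∨ b ∈ P₂) → b ≠ Nv → b ≠ Sv → o a b)
    (hEor : ∀ a b : Fin 6, octAdj a b →
      ¬ (pathEdge P₁ ({a, b} : Finset (Fin 6)) ∨ pathEdge P₂ {a, b}) →
      (∀ F, octFace F → ({a, b} : Finset (Fin 6)) ⊆ F → H F = false) →
      (b ∈ P₁ ∨ b ∈ P₂) → b ≠ Nv → b ≠ Sv → o b a) :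
    octAdj Nv Sv := by
  by_contra hno
  have hmod : Nv.val % 3 = Sv.val % 3 := by
    by_contra hm; exact hno ⟨hNS, hm⟩
  have hcr : ∀ u, u ∈ P₁ → u ≠ Nv → u ≠ Sv → ∀ w, w ∈ P₂ → u ≠ w := by
    intro u hu h1 h2 w hw h
    subst h
    rcases hvert u hu hw with rfl | rfl
    · exact h1 rfl
    · exact h2 rfl
  rcases path_shape Nv Sv P₁ hP₁ hNS hno with ⟨a, hS1⟩ | ⟨a, b, hS1⟩ | ⟨a, b, c, hS1⟩ |
    ⟨a, b, c, d, hS1⟩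
  -- P₁ = [Nv, a, Sv]
  · subst hS1
    obtain ⟨-, -, hch1, hnd1⟩ := hP₁
    simp only [List.Chain', List.isChain_cons_cons, List.isChain_singleton, and_true] at hch1
    have haN : a ≠ Nv := by rintro rfl; simp at hnd1
    have haS : a ≠ Sv := by rintro rfl; simp at hnd1
    have haQ : a ∉ P₂ := by
      intro h
      rcases hvert a (by simp) h with rfl | rfl
      · exact haN rfl
      · exact haS rfl
    exact onecase H P₂ Nv Sv a hNS hmod haN haS hch1.1 hch1.2 haQ
      (fun e => pathEdge [Nv, a, Sv] e ∨ pathEdge P₂ e) (fun e => Iff.rfl) hHsep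
      (fun F G hF hG => hoverlap _ (Or.inl rfl) F G hF hG)
  -- P₁ = [Nv, a, b, Sv]
  · subst hS1
    obtain ⟨-, -, hch1, hnd1⟩ := hP₁
    simp only [List.Chain', List.isChain_cons_cons, List.isChain_singleton, and_true] at hch1
    have haN : a ≠ Nv := by rintro rfl; simp at hnd1
    have haS : a ≠ Sv := by rintro rfl; simp at hnd1
    have hbN : b ≠ Nv := by rintro rfl; simp at hnd1
    have hbS : b ≠ Sv := by rintro rfl; simp at hnd1
    have hab : a ≠ b := by rintro rfl; simp at hnd1
    rcases path_shape Nv Sv P₂ hP₂ hNS hno with ⟨p, hS2⟩ | ⟨p, q, hS2⟩ | ⟨p, q, r, hS2⟩ |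
      ⟨p, q, r, s, hS2⟩
    · -- P₂ = [Nv, p, Sv] : onecase symmetric
      subst hS2
      obtain ⟨-, -, hch2, hnd2⟩ := hP₂
      simp only [List.Chain', List.isChain_cons_cons, List.isChain_singleton, and_true] at hch2
      have hpN : p ≠ Nv := by rintro rfl; simp at hnd2
      have hpS : p ≠ Sv := by rintro rfl; simp at hnd2
      have hpQ : p ∉ [Nv, a, b, Sv] := by
        intro h
        rcases hvert p h (by simp) with rfl | rfl
        · exact hpN rfl
        · exact hpS rfl
      exact onecase H [Nv, a, b, Sv] Nv Sv p hNS hmod hpN hpS hch2.1 hch2.2 hpQ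
        (fun e => pathEdge [Nv, a, b, Sv] e ∨ pathEdge [Nv, p, Sv] e) (fun e => or_comm)
        hHsep (fun F G hF hG => hoverlap _ (Or.inr rfl) F G hF hG)
    · -- P₂ = [Nv, p, q, Sv] : twocase
      subst hS2
      obtain ⟨-, -, hch2, hnd2⟩ := hP₂
      simp only [List.Chain', List.isChain_cons_cons, List.isChain_singleton, and_true] at hch2
      have hpN : p ≠ Nv := by rintro rfl; simp at hnd2
      have hpS : p ≠ Sv := by rintro rfl; simp at hnd2
      have hqN : q ≠ Nv := by rintro rfl; simp at hnd2
      have hqS : q ≠ Sv := by rintro rfl; simp at hnd2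
      have hpq : p ≠ q := by rintro rfl; simp at hnd2
      have hap : a ≠ p := hcr a (by simp) haN haS p (by simp)
      have haq : a ≠ q := hcr a (by simp) haN haS q (by simp)
      have hbp : b ≠ p := hcr b (by simp) hbN hbS p (by simp)
      have hbq : b ≠ q := hcr b (by simp) hbN hbS q (by simp)
      exact twocase H Nv Sv a b p q hNS hmod haN haS hbN hbS hpN hpS hqN hqS
        hap haq hbp hbq hab hpq hch1.1 hch1.2.1 hch1.2.2 hch2.1 hch2.2.1 hch2.2.2
        (fun e => pathEdge [Nv, a, b, Sv] e ∨ pathEdge [Nv, p, q, Sv] e) (fun e => Iff.rfl)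
        hHsep (fun F G hF hG => hoverlap _ (Or.inl rfl) F G hF hG)
    · -- P₂ = [Nv, p, q, r, Sv] : 5 interior vertices
      subst hS2
      obtain ⟨-, -, -, hnd2⟩ := hP₂
      have hpN : p ≠ Nv := by rintro rfl; simp at hnd2
      have hpS : p ≠ Sv := by rintro rfl; simp at hnd2
      have hqN : q ≠ Nv := by rintro rfl; simp at hnd2
      have hqS : q ≠ Sv := by rintro rfl; simp at hnd2
      have hrN : r ≠ Nv := by rintro rfl; simp at hnd2
      have hrS : r ≠ Sv := by rintro rfl; simp at hnd2
      have hpq : p ≠ q := by rintro rfl; simp at hnd2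
      have hpr : p ≠ r := by rintro rfl; simp at hnd2
      have hqr : q ≠ r := by rintro rfl; simp at hnd2
      exact five_absurd Nv Sv a b p q r hNS haN haS hbN hbS hpN hpS hqN hqS hrN hrS
        hab (hcr a (by simp) haN haS p (by simp)) (hcr a (by simp) haN haS q (by simp))
        (hcr a (by simp) haN haS r (by simp)) (hcr b (by simp) hbN hbS p (by simp))
        (hcr b (by simp) hbN hbS q (by simp)) (hcr b (by simp) hbN hbS r (by simp))
        hpq hpr hqr
    · -- P₂ = [Nv, p, q, r, s, Sv]
      subst hS2
      obtain ⟨-, -, -, hnd2⟩ := hP₂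
      have hpN : p ≠ Nv := by rintro rfl; simp at hnd2
      have hpS : p ≠ Sv := by rintro rfl; simp at hnd2
      have hqN : q ≠ Nv := by rintro rfl; simp at hnd2
      have hqS : q ≠ Sv := by rintro rfl; simp at hnd2
      have hrN : r ≠ Nv := by rintro rfl; simp at hnd2
      have hrS : r ≠ Sv := by rintro rfl; simp at hnd2
      have hpq : p ≠ q := by rintro rfl; simp at hnd2
      have hpr : p ≠ r := by rintro rfl; simp at hnd2
      have hqr : q ≠ r := by rintro rfl; simp at hnd2
      exact five_absurd Nv Sv a b p q r hNS haN haS hbN hbS hpN hpS hqN hqS hrN hrS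
        hab (hcr a (by simp) haN haS p (by simp)) (hcr a (by simp) haN haS q (by simp))
        (hcr a (by simp) haN haS r (by simp)) (hcr b (by simp) hbN hbS p (by simp))
        (hcr b (by simp) hbN hbS q (by simp)) (hcr b (by simp) hbN hbS r (by simp))
        hpq hpr hqr
  -- P₁ = [Nv, a, b, c, Sv]
  · subst hS1
    obtain ⟨-, -, -, hnd1⟩ := hP₁
    have haN : a ≠ Nv := by rintro rfl; simp at hnd1
    have haS : a ≠ Sv := by rintro rfl; simp at hnd1
    have hbN : b ≠ Nv := by rintro rfl; simp at hnd1
    have hbS : b ≠ Sv := by rintro rfl; simp at hnd1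
    have hcN : c ≠ Nv := by rintro rfl; simp at hnd1
    have hcS : c ≠ Sv := by rintro rfl; simp at hnd1
    have hab : a ≠ b := by rintro rfl; simp at hnd1
    have hac : a ≠ c := by rintro rfl; simp at hnd1
    have hbc : b ≠ c := by rintro rfl; simp at hnd1
    rcases path_shape Nv Sv P₂ hP₂ hNS hno with ⟨p, hS2⟩ | ⟨p, q, hS2⟩ | ⟨p, q, r, hS2⟩ |
      ⟨p, q, r, s, hS2⟩
    · subst hS2
      obtain ⟨-, -, hch2, hnd2⟩ := hP₂
      simp only [List.Chain', List.isChain_cons_cons, List.isChain_singleton, and_true] at hch2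
      have hpN : p ≠ Nv := by rintro rfl; simp at hnd2
      have hpS : p ≠ Sv := by rintro rfl; simp at hnd2
      have hpQ : p ∉ [Nv, a, b, c, Sv] := by
        intro h
        rcases hvert p h (by simp) with rfl | rfl
        · exact hpN rfl
        · exact hpS rfl
      exact onecase H [Nv, a, b, c, Sv] Nv Sv p hNS hmod hpN hpS hch2.1 hch2.2 hpQ
        (fun e => pathEdge [Nv, a, b, c, Sv] e ∨ pathEdge [Nv, p, Sv] e) (fun e => or_comm)
        hHsep (fun F G hF hG => hoverlap _ (Or.inr rfl) F G hF hG)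
    · subst hS2
      obtain ⟨-, -, -, hnd2⟩ := hP₂
      have hpN : p ≠ Nv := by rintro rfl; simp at hnd2
      have hpS : p ≠ Sv := by rintro rfl; simp at hnd2
      have hqN : q ≠ Nv := by rintro rfl; simp at hnd2
      have hqS : q ≠ Sv := by rintro rfl; simp at hnd2
      have hpq : p ≠ q := by rintro rfl; simp at hnd2
      exact five_absurd Nv Sv a b c p q hNS haN haS hbN hbS hcN hcS hpN hpS hqN hqS
        hab hac (hcr a (by simp) haN haS p (by simp)) (hcr a (by simp) haN haS q (by simp))
        hbc (hcr b (by simp) hbN hbS p (by simp)) (hcr b (by simp) hbN hbS q (by simp))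
        (hcr c (by simp) hcN hcS p (by simp)) (hcr c (by simp) hcN hcS q (by simp)) hpq
    · subst hS2
      obtain ⟨-, -, -, hnd2⟩ := hP₂
      have hpN : p ≠ Nv := by rintro rfl; simp at hnd2
      have hpS : p ≠ Sv := by rintro rfl; simp at hnd2
      have hqN : q ≠ Nv := by rintro rfl; simp at hnd2
      have hqS : q ≠ Sv := by rintro rfl; simp at hnd2
      have hpq : p ≠ q := by rintro rfl; simp at hnd2
      exact five_absurd Nv Sv a b c p q hNS haN haS hbN hbS hcN hcS hpN hpS hqN hqS
        hab hac (hcr a (by simp) haN haS p (by simp)) (hcr a (by simp) haN haS q (by simp))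
        hbc (hcr b (by simp) hbN hbS p (by simp)) (hcr b (by simp) hbN hbS q (by simp))
        (hcr c (by simp) hcN hcS p (by simp)) (hcr c (by simp) hcN hcS q (by simp)) hpq
    · subst hS2
      obtain ⟨-, -, -, hnd2⟩ := hP₂
      have hpN : p ≠ Nv := by rintro rfl; simp at hnd2
      have hpS : p ≠ Sv := by rintro rfl; simp at hnd2
      have hqN : q ≠ Nv := by rintro rfl; simp at hnd2
      have hqS : q ≠ Sv := by rintro rfl; simp at hnd2
      have hpq : p ≠ q := by rintro rfl; simp at hnd2
      exact five_absurd Nv Sv a b c p q hNS haN haS hbN hbS hcN hcS hpN hpS hqN hqS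
        hab hac (hcr a (by simp) haN haS p (by simp)) (hcr a (by simp) haN haS q (by simp))
        hbc (hcr b (by simp) hbN hbS p (by simp)) (hcr b (by simp) hbN hbS q (by simp))
        (hcr c (by simp) hcN hcS p (by simp)) (hcr c (by simp) hcN hcS q (by simp)) hpq
  -- P₁ = [Nv, a, b, c, d, Sv]
  · subst hS1
    obtain ⟨-, -, -, hnd1⟩ := hP₁
    have haN : a ≠ Nv := by rintro rfl; simp at hnd1
    have haS : a ≠ Sv := by rintro rfl; simp at hnd1
    have hbN : b ≠ Nv := by rintro rfl; simp at hnd1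
    have hbS : b ≠ Sv := by rintro rfl; simp at hnd1
    have hcN : c ≠ Nv := by rintro rfl; simp at hnd1
    have hcS : c ≠ Sv := by rintro rfl; simp at hnd1
    have hdN : d ≠ Nv := by rintro rfl; simp at hnd1
    have hdS : d ≠ Sv := by rintro rfl; simp at hnd1
    have hab : a ≠ b := by rintro rfl; simp at hnd1
    have hac : a ≠ c := by rintro rfl; simp at hnd1
    have had : a ≠ d := by rintro rfl; simp at hnd1
    have hbc : b ≠ c := by rintro rfl; simp at hnd1
    have hbd : b ≠ d := by rintro rfl; simp at hnd1
    have hcd : c ≠ d := by rintro rfl; simp at hnd1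
    rcases path_shape Nv Sv P₂ hP₂ hNS hno with ⟨p, hS2⟩ | ⟨p, q, hS2⟩ | ⟨p, q, r, hS2⟩ |
      ⟨p, q, r, s, hS2⟩
    · subst hS2
      obtain ⟨-, -, hch2, hnd2⟩ := hP₂
      simp only [List.Chain', List.isChain_cons_cons, List.isChain_singleton, and_true] at hch2
      have hpN : p ≠ Nv := by rintro rfl; simp at hnd2
      have hpS : p ≠ Sv := by rintro rfl; simp at hnd2
      have hpQ : p ∉ [Nv, a, b, c, d, Sv] := by
        intro h
        rcases hvert p h (by simp) with rfl | rfl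
        · exact hpN rfl
        · exact hpS rfl
      exact onecase H [Nv, a, b, c, d, Sv] Nv Sv p hNS hmod hpN hpS hch2.1 hch2.2 hpQ
        (fun e => pathEdge [Nv, a, b, c, d, Sv] e ∨ pathEdge [Nv, p, Sv] e)
        (fun e => or_comm)
        hHsep (fun F G hF hG => hoverlap _ (Or.inr rfl) F G hF hG)
    · subst hS2
      obtain ⟨-, -, -, hnd2⟩ := hP₂
      have hpN : p ≠ Nv := by rintro rfl; simp at hnd2
      have hpS : p ≠ Sv := by rintro rfl; simp at hnd2
      have hqN : q ≠ Nv := by rintro rfl; simp at hnd2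
      have hqS : q ≠ Sv := by rintro rfl; simp at hnd2
      have hpq : p ≠ q := by rintro rfl; simp at hnd2
      exact five_absurd Nv Sv a b c p q hNS haN haS hbN hbS hcN hcS hpN hpS hqN hqS
        hab hac (hcr a (by simp) haN haS p (by simp)) (hcr a (by simp) haN haS q (by simp))
        hbc (hcr b (by simp) hbN hbS p (by simp)) (hcr b (by simp) hbN hbS q (by simp))
        (hcr c (by simp) hcN hcS p (by simp)) (hcr c (by simp) hcN hcS q (by simp)) hpq
    · subst hS2
      obtain ⟨-, -, -, hnd2⟩ := hP₂
      have hpN : p ≠ Nv := by rintro rfl; simp at hnd2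
      have hpS : p ≠ Sv := by rintro rfl; simp at hnd2
      have hqN : q ≠ Nv := by rintro rfl; simp at hnd2
      have hqS : q ≠ Sv := by rintro rfl; simp at hnd2
      have hpq : p ≠ q := by rintro rfl; simp at hnd2
      exact five_absurd Nv Sv a b c p q hNS haN haS hbN hbS hcN hcS hpN hpS hqN hqS
        hab hac (hcr a (by simp) haN haS p (by simp)) (hcr a (by simp) haN haS q (by simp))
        hbc (hcr b (by simp) hbN hbS p (by simp)) (hcr b (by simp) hbN hbS q (by simp))
        (hcr c (by simp) hcN hcS p (by simp)) (hcr c (by simp) hcN hcS q (by simp)) hpq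
    · subst hS2
      obtain ⟨-, -, -, hnd2⟩ := hP₂
      have hpN : p ≠ Nv := by rintro rfl; simp at hnd2
      have hpS : p ≠ Sv := by rintro rfl; simp at hnd2
      have hqN : q ≠ Nv := by rintro rfl; simp at hnd2
      have hqS : q ≠ Sv := by rintro rfl; simp at hnd2
      have hpq : p ≠ q := by rintro rfl; simp at hnd2
      exact five_absurd Nv Sv a b c p q hNS haN haS hbN hbS hcN hcS hpN hpS hqN hqS
        hab hac (hcr a (by simp) haN haS p (by simp)) (hcr a (by simp) haN haS q (by simp))
        hbc (hcr b (by simp) hbN hbS p (by simp)) (hcr b (by simp) hbN hbS q (by simp))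
        (hcr c (by simp) hcN hcS p (by simp)) (hcr c (by simp) hcN hcS q (by simp)) hpq
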